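/- arXiv:2201.01640 — 2 statements merged into one kernel-verified Lean document; each statement's English description precedes it below -/
import Mathlib

section
/- Let T be a tree of order m ≥ 2 and T' a tree of order m' ≥ 2. Then mr_+^R(T ∘ T') = mr_+^C(T ∘ T') = mm' − 1, where T ∘ T' is the corona product of T with T'. -/
open scoped ComplexOrder

/-- The minimum positive semidefinite rank of a simple graph `G` over the field `𝕜`
(`𝕜 = ℝ` gives `mr₊^ℝ`, `𝕜 = ℂ` gives `mr₊^ℂ`): the minimum rank over all positive
semidefinite Hermitian matrices whose off-diagonal zero/nonzero pattern matches `G`. -/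
noncomputable def mrPlus (𝕜 : Type) [RCLike 𝕜] {V : Type} [Fintype V] [DecidableEq V]
    (G : SimpleGraph V) : ℕ :=
  sInf {r : ℕ | ∃ A : Matrix V V 𝕜, A.PosSemidef ∧
    (∀ i j : V, i ≠ j → (A i j ≠ 0 ↔ G.Adj i j)) ∧ A.rank = r}

/-- `G` is a frame graph in the `d`-dimensional inner product space over `𝕜`:
there is a spanning family (frame) `f` indexed by the vertices such that distinct
vertices are adjacent iff the corresponding vectors are non-orthogonal. -/
def IsFrameGraphIn (𝕜 : Type) [RCLike 𝕜] {V : Type} (G : SimpleGraph V) (d : ℕ) : Prop :=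
  ∃ f : V → EuclideanSpace 𝕜 (Fin d),
    Submodule.span 𝕜 (Set.range f) = ⊤ ∧
    ∀ i j : V, i ≠ j → ((inner 𝕜 (f i) (f j) : 𝕜) ≠ 0 ↔ G.Adj i j)

/-- The strong product of two simple graphs. -/
def strongProd {α β : Type} (G : SimpleGraph α) (H : SimpleGraph β) :
    SimpleGraph (α × β) where
  Adj x y := (x.1 = y.1 ∧ H.Adj x.2 y.2) ∨ (x.2 = y.2 ∧ G.Adj x.1 y.1) ∨
    (G.Adj x.1 y.1 ∧ H.Adj x.2 y.2)
  symm := by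
    constructor
    rintro ⟨a, b⟩ ⟨c, d⟩ (⟨h1, h2⟩ | ⟨h1, h2⟩ | ⟨h1, h2⟩)
    · exact Or.inl ⟨h1.symm, h2.symm⟩
    · exact Or.inr (Or.inl ⟨h1.symm, h2.symm⟩)
    · exact Or.inr (Or.inr ⟨h1.symm, h2.symm⟩)
  loopless := by
    constructor
    rintro ⟨a, b⟩ (⟨_, h⟩ | ⟨_, h⟩ | ⟨h, _⟩)
    · exact H.loopless.irrefl b h
    · exact G.loopless.irrefl a h
    · exact G.loopless.irrefl a h

/-- The join `G ∨ H` of two graphs with disjoint vertex sets. -/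
def joinGraph {α β : Type} (G : SimpleGraph α) (H : SimpleGraph β) :
    SimpleGraph (α ⊕ β) where
  Adj x y := match x, y with
    | Sum.inl a, Sum.inl b => G.Adj a b
    | Sum.inr a, Sum.inr b => H.Adj a b
    | Sum.inl _, Sum.inr _ => True
    | Sum.inr _, Sum.inl _ => True
  symm := by
    constructor
    rintro (a | a) (b | b) h
    · exact h.symm
    · trivial
    · trivial
    · exact h.symm
  loopless := by
    constructor
    rintro (a | a) h
    · exact G.loopless.irrefl a h
    · exact H.loopless.irrefl a h

/-- The vertex-sum `G · H` of `G` and `H`, obtained by identifying the vertex `a` of `G`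
with the vertex `b` of `H` (and no other vertices or edges shared). -/
def vertexSum {α β : Type} (G : SimpleGraph α) (H : SimpleGraph β) (a : α) (b : β) :
    SimpleGraph (α ⊕ {y : β // y ≠ b}) where
  Adj x y := match x, y with
    | Sum.inl u, Sum.inl u' => G.Adj u u'
    | Sum.inr v, Sum.inr v' => H.Adj v.1 v'.1
    | Sum.inl u, Sum.inr v => u = a ∧ H.Adj b v.1
    | Sum.inr v, Sum.inl u => u = a ∧ H.Adj b v.1
  symm := by
    constructor
    rintro (u | v) (u' | v') h
    · exact h.symm
    · exact h
    · exact h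
    · exact h.symm
  loopless := by
    constructor
    rintro (u | v) h
    · exact G.loopless.irrefl u h
    · exact H.loopless.irrefl v.1 h

/-- The corona product `G ∘ H`: one copy of `G`, one copy of `H` for each vertex of `G`,
with every vertex of the `i`-th copy of `H` joined to the `i`-th vertex of `G`. -/
def corona {α β : Type} (G : SimpleGraph α) (H : SimpleGraph β) :
    SimpleGraph (α ⊕ α × β) where
  Adj x y := match x, y with
    | Sum.inl u, Sum.inl u' => G.Adj u u'
    | Sum.inr p, Sum.inr q => p.1 = q.1 ∧ H.Adj p.2 q.2
    | Sum.inl u, Sum.inr p => u = p.1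
    | Sum.inr p, Sum.inl u => u = p.1
  symm := by
    constructor
    rintro (u | p) (u' | q) h
    · exact h.symm
    · exact h
    · exact h
    · exact ⟨h.1.symm, h.2.symm⟩
  loopless := by
    constructor
    rintro (u | p) h
    · exact G.loopless.irrefl u h
    · exact H.loopless.irrefl p.2 h.2

/-- `v : Fin m → V` is an OS-vertex set of `G`: the vertices are distinct, and for each `k`
there is `w` adjacent to `v k`, different from all `v l` with `l ≤ k`, and non-adjacent to
every `v l` (`l < k`) lying in the connected component of `v k` in the subgraph induced by
`{v 0, …, v k}`. -/
def IsOSSet {V : Type} (G : SimpleGraph V) {m : ℕ} (v : Fin m → V) : Prop :=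
  Function.Injective v ∧
  ∀ k : Fin m, ∃ w : V,
    G.Adj (v k) w ∧
    (∀ l : Fin m, l ≤ k → w ≠ v l) ∧
    ∀ l : Fin m, (hl : l < k) →
      (G.induce {x : V | ∃ l' : Fin m, l' ≤ k ∧ x = v l'}).Reachable
        ⟨v l, ⟨l, le_of_lt hl, rfl⟩⟩ ⟨v k, ⟨k, le_refl k, rfl⟩⟩ →
      ¬ G.Adj w (v l)

/-- The OS-number of `G`: the maximum cardinality of an OS-vertex set of `G`. -/
noncomputable def OSNumber {V : Type} (G : SimpleGraph V) : ℕ :=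
  sSup {m : ℕ | ∃ v : Fin m → V, IsOSSet G v}


open Module Submodule

section Helpers
variable {𝕜 : Type} [RCLike 𝕜] {E : Type} [NormedAddCommGroup E] [InnerProductSpace 𝕜 E]

local notation "⟪" x ", " y "⟫" => @inner 𝕜 _ _ x y

lemma inner_span_right_eq_zero {x : E} {S : Set E} (h : ∀ y ∈ S, ⟪x, y⟫ = 0) :
    ∀ y ∈ span 𝕜 S, ⟪x, y⟫ = 0 := by
  intro y hy
  induction hy using Submodule.span_induction with
  | mem z hz => exact h z hz
  | zero => simp
  | add a b _ _ ha hb => simp [inner_add_right, ha, hb]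
  | smul c a _ ha => simp [inner_smul_right, ha]

lemma inner_span_left_eq_zero {x : E} {S : Set E} (h : ∀ y ∈ S, ⟪y, x⟫ = 0) :
    ∀ y ∈ span 𝕜 S, ⟪y, x⟫ = 0 := by
  intro y hy
  rw [inner_eq_zero_symm]
  exact inner_span_right_eq_zero (fun z hz => by rw [inner_eq_zero_symm]; exact h z hz) y hy

lemma inner_span_span_zero {S T : Set E} (h : ∀ u ∈ S, ∀ v ∈ T, ⟪u, v⟫ = 0) :
    ∀ x ∈ span 𝕜 S, ∀ y ∈ span 𝕜 T, ⟪x, y⟫ = 0 := by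
  intro x hx y hy
  refine inner_span_left_eq_zero (fun u hu => ?_) x hx
  exact inner_span_right_eq_zero (h u hu) y hy

lemma finrank_sup_of_ortho [FiniteDimensional 𝕜 E] {K L : Submodule 𝕜 E}
    (h : ∀ x ∈ K, ∀ y ∈ L, ⟪x, y⟫ = 0) :
    finrank 𝕜 K + finrank 𝕜 L ≤ finrank 𝕜 ↥(K ⊔ L) := by
  have hd : K ⊓ L = ⊥ := by
    rw [eq_bot_iff]
    intro x hx
    have := h x hx.1 x hx.2
    simp [inner_self_eq_zero.mp this]
  have := Submodule.finrank_sup_add_finrank_inf_eq K L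
  rw [hd, finrank_bot] at this
  omega

lemma finrank_sum_le_of_orthoFamily [FiniteDimensional 𝕜 E] {ι : Type} [Fintype ι]
    (K : ι → Submodule 𝕜 E)
    (h : ∀ i j, i ≠ j → ∀ x ∈ K i, ∀ y ∈ K j, ⟪x, y⟫ = 0) :
    ∑ i, finrank 𝕜 (K i) ≤ finrank 𝕜 ↥(⨆ i, K i) := by
  classical
  suffices H : ∀ s : Finset ι, ∑ i ∈ s, finrank 𝕜 (K i) ≤ finrank 𝕜 ↥(s.sup K) by
    have h2 := H Finset.univ
    rwa [Finset.sup_univ_eq_iSup] at h2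
  intro s
  induction s using Finset.induction_on with
  | empty => simp
  | @insert a s ha ih =>
    rw [Finset.sum_insert ha, Finset.sup_insert]
    have hle : s.sup K ≤ (K a)ᗮ := by
      refine Finset.sup_le fun i hi => ?_
      intro y hy
      rw [Submodule.mem_orthogonal]
      intro u hu
      exact h a i (fun he => ha (he ▸ hi)) u hu y hy
    have horth : ∀ x ∈ K a, ∀ y ∈ (s.sup K : Submodule 𝕜 E), ⟪x, y⟫ = 0 := by
      intro x hx y hy
      exact (Submodule.mem_orthogonal _ _).mp (hle hy) x hx
    calc finrank 𝕜 (K a) + ∑ i ∈ s, finrank 𝕜 (K i)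
        ≤ finrank 𝕜 (K a) + finrank 𝕜 ↥(s.sup K) := by omega
      _ ≤ _ := finrank_sup_of_ortho horth

end Helpers

lemma exists_adj_of_preconnected {V : Type} {G : SimpleGraph V} [Fintype V]
    (hc : G.Preconnected) (h2 : 2 ≤ Fintype.card V) (v : V) : ∃ w, G.Adj v w := by
  obtain ⟨w, hw⟩ := Fintype.exists_ne_of_one_lt_card (by omega) v
  obtain ⟨p⟩ := hc v w
  cases p with
  | nil => exact absurd rfl hw
  | cons h q => exact ⟨_, h⟩

lemma exists_leaf {V : Type} [Fintype V] [DecidableEq V] {G : SimpleGraph V}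
    [DecidableRel G.Adj] (hT : G.IsTree) (h2 : 2 ≤ Fintype.card V) :
    ∃ ℓ : V, G.degree ℓ = 1 := by
  by_contra hno
  push_neg at hno
  have hdeg : ∀ v, 2 ≤ G.degree v := by
    intro v
    obtain ⟨w, hw⟩ := exists_adj_of_preconnected hT.isConnected.preconnected h2 v
    have h1 : 0 < G.degree v := by
      rw [G.degree_pos_iff_exists_adj]
      exact ⟨w, hw⟩
    have := hno v
    omega
  have hsum := G.sum_degrees_eq_twice_card_edges
  have hcard := hT.card_edgeFinset
  have hge : 2 * Fintype.card V ≤ ∑ v, G.degree v := by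
    calc 2 * Fintype.card V = ∑ _v : V, 2 := by
          rw [Finset.sum_const, Finset.card_univ]; ring
      _ ≤ _ := Finset.sum_le_sum fun v _ => hdeg v
  omega

lemma isAcyclic_induce {V : Type} {G : SimpleGraph V} (hG : G.IsAcyclic) (s : Set V) :
    (G.induce s).IsAcyclic := by
  intro v c hc
  exact hG (c.map (SimpleGraph.Embedding.induce (G := G) s).toHom)
    (hc.map (SimpleGraph.Embedding.induce (G := G) s).injective)

lemma walk_avoid_leaf {V : Type} {G : SimpleGraph V} {ℓ p : V}
    (hnb : ∀ w, G.Adj ℓ w → w = p) :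
    ∀ {x y : V} (w : G.Walk x y), w.IsPath → (hx : x ≠ ℓ) → (hy : y ≠ ℓ) →
      (G.induce {v : V | v ≠ ℓ}).Reachable ⟨x, hx⟩ ⟨y, hy⟩ := by
  intro x y w
  induction w with
  | nil => intro _ hx _; exact SimpleGraph.Reachable.refl _
  | @cons x z y h q ih =>
    intro hp hx hy
    rw [SimpleGraph.Walk.cons_isPath_iff] at hp
    by_cases hz : z = ℓ
    · subst hz
      cases q with
      | nil => exact absurd rfl hy
      | @cons _ z' _ h2 q' =>
        have hz' : z' = p := hnb _ h2
        have hxp : x = p := hnb _ h.symm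
        exfalso
        apply hp.2
        rw [SimpleGraph.Walk.support_cons]
        exact List.mem_cons_of_mem _ (hxp ▸ hz' ▸ q'.start_mem_support)
    · have hadj : (G.induce {v : V | v ≠ ℓ}).Adj ⟨x, hx⟩ ⟨z, hz⟩ := h
      exact (hadj.reachable).trans (ih hp.1 hz hy)

lemma isTree_induce_of_leaf {V : Type} [Fintype V] [DecidableEq V] {G : SimpleGraph V}
    {ℓ p : V} (hT : G.IsTree) (hadj : G.Adj ℓ p) (hnb : ∀ w, G.Adj ℓ w → w = p) :
    (G.induce {v : V | v ≠ ℓ}).IsTree := by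
  constructor
  · rw [SimpleGraph.connected_iff]
    constructor
    · rintro ⟨x, hx⟩ ⟨y, hy⟩
      obtain ⟨w⟩ := hT.isConnected.preconnected x y
      exact walk_avoid_leaf hnb w.bypass w.bypass_isPath hx hy
    · exact ⟨⟨p, fun hpe => G.irrefl (hpe ▸ hadj)⟩⟩
  · exact isAcyclic_induce hT.IsAcyclic _

section TreeLB
variable {𝕜 : Type} [RCLike 𝕜] {E : Type} [NormedAddCommGroup E] [InnerProductSpace 𝕜 E]
  [FiniteDimensional 𝕜 E]

local notation "⟪" x ", " y "⟫" => @inner 𝕜 _ _ x y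

lemma tree_span_lb (n : ℕ) :
    ∀ (V : Type) [Fintype V] (G : SimpleGraph V), G.IsTree →
      Fintype.card V = n → ∀ g : V → E,
      (∀ i j : V, i ≠ j → (⟪g i, g j⟫ ≠ 0 ↔ G.Adj i j)) →
      n - 1 ≤ finrank 𝕜 ↥(span 𝕜 (Set.range g)) := by
  induction n using Nat.strong_induction_on with
  | _ n ih =>
    intro V _ G hT hcard g hg
    rcases le_or_gt n 1 with h1 | h1
    · have : n - 1 = 0 := by omega
      rw [this]; exact Nat.zero_le _
    · classical
      obtain ⟨ℓ, hℓ⟩ := exists_leaf hT (by omega)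
      obtain ⟨p, hp⟩ := Finset.card_eq_one.mp hℓ
      have hnb : ∀ w, G.Adj ℓ w → w = p := by
        intro w hw
        have : w ∈ G.neighborFinset ℓ := (SimpleGraph.mem_neighborFinset _ _ _).mpr hw
        rw [hp, Finset.mem_singleton] at this
        exact this
      have hadj : G.Adj ℓ p := by
        have : p ∈ G.neighborFinset ℓ := by rw [hp]; exact Finset.mem_singleton_self p
        exact (SimpleGraph.mem_neighborFinset _ _ _).mp this
      have hℓp : ℓ ≠ p := G.ne_of_adj hadj
      have hinner : ⟪g ℓ, g p⟫ ≠ 0 := (hg ℓ p hℓp).mpr hadj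
      have hgℓ : g ℓ ≠ 0 := by
        intro h0; apply hinner; rw [h0, inner_zero_left]
      have hss : ⟪g ℓ, g ℓ⟫ ≠ 0 := fun h0 => hgℓ (inner_self_eq_zero.mp h0)
      -- the induced tree on the complement of ℓ
      set s : Set V := {v : V | v ≠ ℓ} with hs
      have hT' : (G.induce s).IsTree := isTree_induce_of_leaf hT hadj hnb
      have hcard' : Fintype.card ↥s = n - 1 := by
        have : Fintype.card ↥s = Fintype.card V - 1 := by
          simp only [hs]
          rw [Set.card_ne_eq]
        omega
      -- projected vectors
      set c : V → 𝕜 := fun v => ⟪g ℓ, g v⟫ / ⟪g ℓ, g ℓ⟫ with hc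
      set g' : ↥s → E := fun v => g v.1 - c v.1 • g ℓ with hg'
      have hperp : ∀ v : ↥s, ⟪g ℓ, g' v⟫ = 0 := by
        intro v
        simp only [hg', inner_sub_right, inner_smul_right, hc]
        field_simp; simp
      -- non-neighbors of ℓ have zero inner products with g ℓ
      have hz : ∀ v : V, v ≠ ℓ → ¬ G.Adj ℓ v → ⟪g ℓ, g v⟫ = 0 ∧ ⟪g v, g ℓ⟫ = 0 := by
        intro v hv hnadj
        constructor
        · by_contra hne; exact hnadj ((hg ℓ v (Ne.symm hv)).mp hne)
        · by_contra hne; exact hnadj (((hg v ℓ hv).mp hne).symm)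
      have hpat : ∀ v w : ↥s, v ≠ w → (⟪g' v, g' w⟫ ≠ 0 ↔ (G.induce s).Adj v w) := by
        intro v w hvw
        have hvw1 : v.1 ≠ w.1 := fun h => hvw (Subtype.ext h)
        have heq : ⟪g' v, g' w⟫ = ⟪g v.1, g w.1⟫ := by
          have hcase : ¬ G.Adj ℓ v.1 ∨ ¬ G.Adj ℓ w.1 := by
            by_contra hb
            push_neg at hb
            exact hvw1 ((hnb _ hb.1).trans (hnb _ hb.2).symm)
          rcases hcase with hnv | hnw
          · obtain ⟨h1, h2⟩ := hz v.1 v.2 hnv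
            have hcv : c v.1 = 0 := by rw [hc]; simp [h1]
            simp only [hg', hcv, zero_smul, sub_zero, inner_sub_right, inner_smul_right, h2,
              mul_zero, sub_zero]
          · obtain ⟨h1, h2⟩ := hz w.1 w.2 hnw
            have hcw : c w.1 = 0 := by rw [hc]; simp [h1]
            simp only [hg', hcw, zero_smul, sub_zero, inner_sub_left, inner_smul_left, h1,
              mul_zero, sub_zero]
        rw [heq]
        exact hg v.1 w.1 hvw1
      have hIH := ih (n - 1) (by omega) ↥s (G.induce s) hT' hcard' g' hpat
      -- now add g ℓ
      set W' : Submodule 𝕜 E := span 𝕜 (Set.range g') with hW'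
      have hgl_perp : ∀ y ∈ W', ⟪g ℓ, y⟫ = 0 := by
        refine inner_span_right_eq_zero ?_
        rintro y ⟨v, rfl⟩
        exact hperp v
      have hgl_notin : g ℓ ∉ W' := fun hmem => hss (hgl_perp _ hmem)
      have hle1 : W' ≤ span 𝕜 (Set.range g) := by
        rw [hW', Submodule.span_le]
        rintro y ⟨v, rfl⟩
        exact sub_mem (subset_span ⟨v.1, rfl⟩) (Submodule.smul_mem _ _ (subset_span ⟨ℓ, rfl⟩))
      have hlt : W' < W' ⊔ (𝕜 ∙ g ℓ) := by
        refine lt_of_le_of_ne le_sup_left fun hEq => ?_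
        apply hgl_notin
        rw [hEq]
        exact (le_sup_right : (𝕜 ∙ g ℓ) ≤ _) (Submodule.mem_span_singleton_self _)
      have hle2 : W' ⊔ (𝕜 ∙ g ℓ) ≤ span 𝕜 (Set.range g) := by
        refine sup_le hle1 ?_
        rw [Submodule.span_singleton_le_iff_mem]
        exact subset_span ⟨ℓ, rfl⟩
      have h3 := Submodule.finrank_lt_finrank_of_lt hlt
      have h4 : finrank 𝕜 ↥(W' ⊔ (𝕜 ∙ g ℓ)) ≤ finrank 𝕜 ↥(span 𝕜 (Set.range g)) :=
        Submodule.finrank_mono hle2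
      omega

end TreeLB


section CoronaLB
variable {𝕜 : Type} [RCLike 𝕜] {E : Type} [NormedAddCommGroup E] [InnerProductSpace 𝕜 E]
  [FiniteDimensional 𝕜 E]

local notation "⟪" x ", " y "⟫" => @inner 𝕜 _ _ x y

lemma corona_span_lb {m m' : ℕ} (hm : 2 ≤ m) (hm' : 2 ≤ m')
    (T : SimpleGraph (Fin m)) (hT : T.IsTree)
    (T' : SimpleGraph (Fin m')) (hT' : T'.IsTree)
    (g : Fin m ⊕ Fin m × Fin m' → E)
    (hg : ∀ x y, x ≠ y → (⟪g x, g y⟫ ≠ 0 ↔ (corona T T').Adj x y)) :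
    m * m' - 1 ≤ finrank 𝕜 ↥(span 𝕜 (Set.range g)) := by
  classical
  -- the copy subspaces
  set Y : Fin m → Submodule 𝕜 E :=
    fun i => span 𝕜 (Set.range fun j : Fin m' => g (.inr (i, j))) with hY
  have hYlb : ∀ i, m' - 1 ≤ finrank 𝕜 (Y i) := by
    intro i
    refine tree_span_lb m' (Fin m') T' hT' (Fintype.card_fin m')
      (fun j => g (.inr (i, j))) ?_
    intro j k hjk
    have hne : (Sum.inr (i, j) : Fin m ⊕ Fin m × Fin m') ≠ Sum.inr (i, k) := by
      simp [hjk]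
    rw [hg _ _ hne]
    show (corona T T').Adj (.inr (i, j)) (.inr (i, k)) ↔ _
    simp [corona]
  -- orthogonality between copies
  have hYorth : ∀ i k, i ≠ k → ∀ x ∈ Y i, ∀ y ∈ Y k, ⟪x, y⟫ = 0 := by
    intro i k hik
    refine inner_span_span_zero ?_
    rintro u ⟨j, rfl⟩ v ⟨j', rfl⟩
    have hne : (Sum.inr (i, j) : Fin m ⊕ Fin m × Fin m') ≠ Sum.inr (k, j') := by
      simp [hik]
    have : ¬ (corona T T').Adj (.inr (i, j)) (.inr (k, j')) := by
      simp [corona, hik]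
    by_contra hne0
    exact this ((hg _ _ hne).mp hne0)
  -- apexes orthogonal to other copies
  have hcross : ∀ i k, i ≠ k → ∀ y ∈ Y k, ⟪g (.inl i), y⟫ = 0 := by
    intro i k hik
    refine inner_span_right_eq_zero ?_
    rintro y ⟨j, rfl⟩
    have hne : (Sum.inl i : Fin m ⊕ Fin m × Fin m') ≠ Sum.inr (k, j) := by simp
    have : ¬ (corona T T').Adj (.inl i) (.inr (k, j)) := by
      simp [corona, hik]
    by_contra hne0
    exact this ((hg _ _ hne).mp hne0)
  -- projections of the apexes
  set z : Fin m → E := fun i => (orthogonalProjection (Y i) (g (.inl i)) : E) with hzdef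
  have hzmem : ∀ i, z i ∈ Y i := fun i => (orthogonalProjection (Y i) (g (.inl i))).2
  set h : Fin m → E := fun i => g (.inl i) - z i with hhdef
  have hhperp : ∀ i, ∀ y ∈ Y i, ⟪y, h i⟫ = 0 := by
    intro i y hy
    exact (Submodule.mem_orthogonal _ _).mp
      (Submodule.sub_starProjection_mem_orthogonal (K := Y i) (g (.inl i))) y hy
  have hhperp' : ∀ i, ∀ y ∈ Y i, ⟪h i, y⟫ = 0 := by
    intro i y hy
    rw [inner_eq_zero_symm]
    exact hhperp i y hy
  -- h has the pattern of T
  have hhinner : ∀ i j, i ≠ j → ⟪h i, h j⟫ = ⟪g (.inl i), g (.inl j)⟫ := by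
    intro i j hij
    simp only [hhdef, inner_sub_left, inner_sub_right]
    rw [hcross i j hij _ (hzmem j),
      show ⟪z i, g (.inl j)⟫ = 0 from
        (inner_eq_zero_symm).mp (hcross j i (Ne.symm hij) _ (hzmem i)),
      hYorth i j hij _ (hzmem i) _ (hzmem j)]
    ring
  have hhpat : ∀ i j : Fin m, i ≠ j → (⟪h i, h j⟫ ≠ 0 ↔ T.Adj i j) := by
    intro i j hij
    rw [hhinner i j hij]
    have hne : (Sum.inl i : Fin m ⊕ Fin m × Fin m') ≠ Sum.inl j := by simp [hij]
    rw [hg _ _ hne]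
    show (corona T T').Adj (.inl i) (.inl j) ↔ _
    simp [corona]
  have hHlb : m - 1 ≤ finrank 𝕜 ↥(span 𝕜 (Set.range h)) :=
    tree_span_lb m (Fin m) T hT (Fintype.card_fin m) h hhpat
  -- total Y
  have hYtotlb : m * (m' - 1) ≤ finrank 𝕜 ↥(⨆ i, Y i) := by
    have h1 := finrank_sum_le_of_orthoFamily Y hYorth
    have h2 : m * (m' - 1) ≤ ∑ i : Fin m, finrank 𝕜 (Y i) := by
      calc m * (m' - 1) = ∑ _i : Fin m, (m' - 1) := by
            rw [Finset.sum_const, Finset.card_univ, Fintype.card_fin, smul_eq_mul]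
        _ ≤ _ := Finset.sum_le_sum fun i _ => hYlb i
    omega
  -- h_i is orthogonal to (⨆ i, Y i)
  have hhYtot : ∀ i, ∀ y ∈ (⨆ i, Y i), ⟪h i, y⟫ = 0 := by
    intro i
    have hle : (⨆ i, Y i) ≤ (𝕜 ∙ h i)ᗮ := by
      refine iSup_le fun k => ?_
      intro y hy
      rw [Submodule.mem_orthogonal_singleton_iff_inner_right]
      by_cases hik : k = i
      · subst hik; exact hhperp' k y hy
      · calc ⟪h i, y⟫ = ⟪g (.inl i), y⟫ - ⟪z i, y⟫ := by
              simp [hhdef, inner_sub_left]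
          _ = 0 := by
              rw [hcross i k (fun he => hik he.symm) y hy,
                hYorth i k (fun he => hik he.symm) _ (hzmem i) y hy, sub_zero]
    intro y hy
    exact Submodule.mem_orthogonal_singleton_iff_inner_right.mp (hle hy)
  have horth : ∀ x ∈ span 𝕜 (Set.range h), ∀ y ∈ (⨆ i, Y i), ⟪x, y⟫ = 0 := by
    intro x hx y hy
    refine inner_span_left_eq_zero ?_ x hx
    rintro u ⟨i, rfl⟩
    exact hhYtot i y hy
  -- everything lives inside span (range g)
  have hYle : (⨆ i, Y i) ≤ span 𝕜 (Set.range g) := by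
    refine iSup_le fun i => ?_
    rw [hY, Submodule.span_le]
    rintro y ⟨j, rfl⟩
    exact subset_span ⟨.inr (i, j), rfl⟩
  have hHle : span 𝕜 (Set.range h) ≤ span 𝕜 (Set.range g) := by
    rw [Submodule.span_le]
    rintro y ⟨i, rfl⟩
    exact sub_mem (subset_span ⟨.inl i, rfl⟩) (hYle (le_iSup Y i (hzmem i)))
  have hsum : finrank 𝕜 ↥(span 𝕜 (Set.range h)) + finrank 𝕜 ↥(⨆ i, Y i) ≤
      finrank 𝕜 ↥(span 𝕜 (Set.range g)) := by
    calc finrank 𝕜 ↥(span 𝕜 (Set.range h)) + finrank 𝕜 ↥(⨆ i, Y i)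
        ≤ finrank 𝕜 ↥(span 𝕜 (Set.range h) ⊔ (⨆ i, Y i)) := finrank_sup_of_ortho horth
      _ ≤ _ := Submodule.finrank_mono (sup_le hHle hYle)
  -- arithmetic
  obtain ⟨a, rfl⟩ : ∃ a, m = a + 2 := ⟨m - 2, by omega⟩
  obtain ⟨b, rfl⟩ : ∃ b, m' = b + 2 := ⟨m' - 2, by omega⟩
  have harith1 : (a + 2) * (b + 2 - 1) = a * b + a + 2 * b + 2 := by
    have : b + 2 - 1 = b + 1 := by omega
    rw [this]; ring
  have harith2 : (a + 2) * (b + 2) = a * b + 2 * a + 2 * b + 4 := by ring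
  rw [harith1] at hYtotlb
  rw [harith2]
  omega

end CoronaLB

section MatrixLB
variable {𝕜 : Type} [RCLike 𝕜]

lemma corona_rank_lb {m m' : ℕ} (hm : 2 ≤ m) (hm' : 2 ≤ m')
    (T : SimpleGraph (Fin m)) (hT : T.IsTree)
    (T' : SimpleGraph (Fin m')) (hT' : T'.IsTree)
    (A : Matrix (Fin m ⊕ Fin m × Fin m') (Fin m ⊕ Fin m × Fin m') 𝕜)
    (hA : A.PosSemidef)
    (hpat : ∀ x y, x ≠ y → (A x y ≠ 0 ↔ (corona T T').Adj x y)) :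
    m * m' - 1 ≤ A.rank := by
  classical
  obtain ⟨B, rfl⟩ : ∃ B : Matrix (Fin m ⊕ Fin m × Fin m') (Fin m ⊕ Fin m × Fin m') 𝕜,
      A = B.conjTranspose * B := by
    open scoped MatrixOrder in
    exact CStarAlgebra.nonneg_iff_eq_star_mul_self.mp hA.nonneg
  rw [Matrix.rank_conjTranspose_mul_self, Matrix.rank_eq_finrank_span_cols]
  -- move into EuclideanSpace
  set e := WithLp.linearEquiv 2 𝕜 ((Fin m ⊕ Fin m × Fin m') → 𝕜) with he
  set g : (Fin m ⊕ Fin m × Fin m') → EuclideanSpace 𝕜 (Fin m ⊕ Fin m × Fin m') := fun v => e.symm (B.col v) with hgdef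
  have hspan : finrank 𝕜 ↥(span 𝕜 (Set.range B.col)) = finrank 𝕜 ↥(span 𝕜 (Set.range g)) := by
    have : Set.range g = e.symm '' Set.range B.col := by
      rw [← Set.range_comp]; rfl
    rw [this, ← LinearEquiv.coe_coe, ← Submodule.map_span]
    exact (LinearEquiv.finrank_map_eq _ _).symm
  rw [hspan]
  have hinner : ∀ x y : Fin m ⊕ Fin m × Fin m', (inner 𝕜 (g x) (g y) : 𝕜) = (B.conjTranspose * B) x y := by
    intro x y
    rw [PiLp.inner_apply, Matrix.mul_apply]
    apply Finset.sum_congr rfl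
    intro i _
    rw [Matrix.conjTranspose_apply, RCLike.inner_apply']
    rfl
  refine corona_span_lb hm hm' T hT T' hT' g ?_
  intro x y hxy
  rw [hinner x y]
  exact hpat x y hxy

end MatrixLB

section UpperBound
variable {𝕜 : Type} [RCLike 𝕜]

lemma corona_ub {m m' : ℕ} (hm : 2 ≤ m) (hm' : 2 ≤ m')
    (T : SimpleGraph (Fin m)) (hT : T.IsTree)
    (T' : SimpleGraph (Fin m')) (hT' : T'.IsTree) :
    ∃ A : Matrix (Fin m ⊕ Fin m × Fin m') (Fin m ⊕ Fin m × Fin m') 𝕜,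
      A.PosSemidef ∧ (∀ x y, x ≠ y → (A x y ≠ 0 ↔ (corona T T').Adj x y)) ∧
      A.rank ≤ m * m' - 1 := by
  classical
  letI : DecidableRel T.Adj := Classical.decRel _
  letI : DecidableRel T'.Adj := Classical.decRel _
  set D := ({e // e ∈ T.edgeFinset} ⊕ Fin m × {e // e ∈ T'.edgeFinset}) with hD
  set P : D → (Fin m ⊕ Fin m × Fin m') → Prop := fun d v =>
    match d, v with
    | .inl e, .inl i => i ∈ e.1
    | .inl _, .inr _ => False
    | .inr (c, _), .inl i => i = c
    | .inr (c, e'), .inr p => p.1 = c ∧ p.2 ∈ e'.1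
    with hP
  set B : Matrix D (Fin m ⊕ Fin m × Fin m') 𝕜 := fun d v => if P d v then 1 else 0 with hB
  refine ⟨B.conjTranspose * B, Matrix.posSemidef_conjTranspose_mul_self B, ?_, ?_⟩
  · intro x y hxy
    have hentry : (B.conjTranspose * B) x y =
        ((Finset.univ.filter fun d : D => P d x ∧ P d y).card : 𝕜) := by
      rw [Matrix.mul_apply, ← Finset.sum_boole]
      refine Finset.sum_congr rfl fun d _ => ?_
      rw [Matrix.conjTranspose_apply, hB]
      by_cases h1 : P d x <;> by_cases h2 : P d y <;> simp [h1, h2]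
    have key : (∃ d : D, P d x ∧ P d y) ↔ (corona T T').Adj x y := by
      cases x with
      | inl i =>
        cases y with
        | inl i' =>
          have hii : i ≠ i' := fun h => hxy (by rw [h])
          show _ ↔ T.Adj i i'
          constructor
          · rintro ⟨d, h1, h2⟩
            cases d with
            | inl e =>
              have he2 := e.2
              rw [SimpleGraph.mem_edgeFinset] at he2
              have hmm : e.1 = s(i, i') := (Sym2.mem_and_mem_iff hii).mp ⟨h1, h2⟩
              rw [hmm, SimpleGraph.mem_edgeSet] at he2
              exact he2
            | inr ce =>
              obtain ⟨c, e'⟩ := ce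
              exact absurd ((h1 : i = c).trans (h2 : i' = c).symm) hii
          · intro hAdj
            refine ⟨.inl ⟨s(i, i'), ?_⟩, ?_, ?_⟩
            · rw [SimpleGraph.mem_edgeFinset, SimpleGraph.mem_edgeSet]; exact hAdj
            · exact Sym2.mem_mk_left i i'
            · exact Sym2.mem_mk_right i i'
        | inr p =>
          obtain ⟨i'', j⟩ := p
          show _ ↔ i = i''
          constructor
          · rintro ⟨d, h1, h2⟩
            cases d with
            | inl e => exact absurd h2 (by simp [hP])
            | inr ce =>
              obtain ⟨c, e'⟩ := ce
              exact (h1 : i = c).trans ((h2 : i'' = c ∧ j ∈ e'.1).1).symm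
          · rintro rfl
            obtain ⟨k, hk⟩ := exists_adj_of_preconnected hT'.isConnected.preconnected
              (by rw [Fintype.card_fin]; omega) j
            refine ⟨.inr (i, ⟨s(j, k), ?_⟩), rfl, rfl, Sym2.mem_mk_left j k⟩
            rw [SimpleGraph.mem_edgeFinset, SimpleGraph.mem_edgeSet]; exact hk
      | inr p =>
        obtain ⟨i, j⟩ := p
        cases y with
        | inl i'' =>
          show _ ↔ i'' = i
          constructor
          · rintro ⟨d, h1, h2⟩
            cases d with
            | inl e => exact absurd h1 (by simp [hP])
            | inr ce =>
              obtain ⟨c, e'⟩ := ce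
              exact (h2 : i'' = c).trans ((h1 : i = c ∧ j ∈ e'.1).1).symm
          · rintro rfl
            obtain ⟨k, hk⟩ := exists_adj_of_preconnected hT'.isConnected.preconnected
              (by rw [Fintype.card_fin]; omega) j
            refine ⟨.inr (i'', ⟨s(j, k), ?_⟩), ⟨rfl, Sym2.mem_mk_left j k⟩, rfl⟩
            rw [SimpleGraph.mem_edgeFinset, SimpleGraph.mem_edgeSet]; exact hk
        | inr q =>
          obtain ⟨i', k⟩ := q
          show _ ↔ i = i' ∧ T'.Adj j k
          constructor
          · rintro ⟨d, h1, h2⟩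
            cases d with
            | inl e => exact absurd h1 (by simp [hP])
            | inr ce =>
              obtain ⟨c, e'⟩ := ce
              obtain ⟨hc1, hj⟩ := (h1 : i = c ∧ j ∈ e'.1)
              obtain ⟨hc2, hk⟩ := (h2 : i' = c ∧ k ∈ e'.1)
              have hii' : i = i' := hc1.trans hc2.symm
              have hjk : j ≠ k := by
                rintro rfl
                exact hxy (by rw [hii'])
              have he2 := e'.2
              rw [SimpleGraph.mem_edgeFinset] at he2
              have hmm : e'.1 = s(j, k) := (Sym2.mem_and_mem_iff hjk).mp ⟨hj, hk⟩
              rw [hmm, SimpleGraph.mem_edgeSet] at he2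
              exact ⟨hii', he2⟩
          · rintro ⟨rfl, hAdj⟩
            refine ⟨.inr (i, ⟨s(j, k), ?_⟩), ⟨rfl, Sym2.mem_mk_left j k⟩,
              ⟨rfl, Sym2.mem_mk_right j k⟩⟩
            rw [SimpleGraph.mem_edgeFinset, SimpleGraph.mem_edgeSet]; exact hAdj
    rw [hentry, Nat.cast_ne_zero, Finset.card_ne_zero, Finset.filter_nonempty_iff]
    simp only [Finset.mem_univ, true_and]
    exact key
  · have h1 : (B.conjTranspose * B).rank ≤ B.conjTranspose.rank :=
      Matrix.rank_mul_le_left _ _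
    have h2 : B.conjTranspose.rank ≤ Fintype.card D := Matrix.rank_le_card_width _
    have hcD : Fintype.card D = m * m' - 1 := by
      have h3 := hT.card_edgeFinset
      have h4 := hT'.card_edgeFinset
      rw [Fintype.card_fin] at h3 h4
      have h5 : Fintype.card D =
          T.edgeFinset.card + m * T'.edgeFinset.card := by
        show Fintype.card ({e // e ∈ T.edgeFinset} ⊕ Fin m × {e // e ∈ T'.edgeFinset}) = _
        rw [Fintype.card_sum, Fintype.card_prod, Fintype.card_fin,
          Fintype.card_coe, Fintype.card_coe]
      rw [h5]
      set a := T.edgeFinset.card with ha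
      set b := T'.edgeFinset.card with hb
      have hma : m = a + 1 := by omega
      have hmb : m' = b + 1 := by omega
      rw [hma, hmb]
      have hx : (a + 1) * (b + 1) = (a + 1) * b + (a + 1) := by ring
      rw [hx]
      generalize (a + 1) * b = t
      omega
    omega

end UpperBound

section Main

theorem mrPlus_eq_of_rclike (𝕜 : Type) [RCLike 𝕜] {m m' : ℕ} (hm : 2 ≤ m) (hm' : 2 ≤ m')
    (T : SimpleGraph (Fin m)) (hT : T.IsTree)
    (T' : SimpleGraph (Fin m')) (hT' : T'.IsTree) :
    mrPlus 𝕜 (corona T T') = m * m' - 1 := by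
  obtain ⟨A, hPSD, hpat, hrank⟩ := corona_ub (𝕜 := 𝕜) hm hm' T hT T' hT'
  have hlb : ∀ r ∈ {r : ℕ | ∃ A : Matrix (Fin m ⊕ Fin m × Fin m') (Fin m ⊕ Fin m × Fin m') 𝕜,
      A.PosSemidef ∧ (∀ i j, i ≠ j → (A i j ≠ 0 ↔ (corona T T').Adj i j)) ∧ A.rank = r},
      m * m' - 1 ≤ r := by
    rintro r ⟨A', h1, h2, rfl⟩
    exact corona_rank_lb hm hm' T hT T' hT' A' h1 h2
  have hA : A.rank = m * m' - 1 :=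
    le_antisymm hrank (hlb _ ⟨A, hPSD, hpat, rfl⟩)
  unfold mrPlus
  apply le_antisymm
  · exact Nat.sInf_le ⟨A, hPSD, hpat, hA⟩
  · exact le_csInf ⟨A.rank, A, hPSD, hpat, rfl⟩ hlb

end Main

/-- for trees `T` of order `m ≥ 2` and `T'` of order `m' ≥ 2`,
`mr₊(T ∘ T') = mm' − 1`. -/
theorem mrPlus_corona_tree_tree (m m' : ℕ) (hm : 2 ≤ m) (hm' : 2 ≤ m')
    (T : SimpleGraph (Fin m)) (hT : T.IsTree)
    (T' : SimpleGraph (Fin m')) (hT' : T'.IsTree) :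
    mrPlus ℝ (corona T T') = m * m' - 1 ∧ mrPlus ℂ (corona T T') = m * m' - 1 :=
  ⟨mrPlus_eq_of_rclike ℝ hm hm' T hT T' hT', mrPlus_eq_of_rclike ℂ hm hm' T hT T' hT'⟩
end

section
/- Let T be a tree of order m ≥ 2 and n ≥ 2. Then mr_+^R(T ∘ K_n) = mr_+^C(T ∘ K_n) = 2m − 1, where T ∘ K_n is the corona product of T with the complete graph K_n. -/
open scoped ComplexOrder

open Finset in
lemma corona_adj_ll {α β : Type} {G : SimpleGraph α} {H : SimpleGraph β} {u u' : α} :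
    (corona G H).Adj (Sum.inl u) (Sum.inl u') ↔ G.Adj u u' := Iff.rfl
lemma corona_adj_lr {α β : Type} {G : SimpleGraph α} {H : SimpleGraph β} {u : α} {p : α × β} :
    (corona G H).Adj (Sum.inl u) (Sum.inr p) ↔ u = p.1 := Iff.rfl
lemma corona_adj_rl {α β : Type} {G : SimpleGraph α} {H : SimpleGraph β} {u : α} {p : α × β} :
    (corona G H).Adj (Sum.inr p) (Sum.inl u) ↔ u = p.1 := Iff.rfl
lemma corona_adj_rr {α β : Type} {G : SimpleGraph α} {H : SimpleGraph β} {p q : α × β} :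
    (corona G H).Adj (Sum.inr p) (Sum.inr q) ↔ p.1 = q.1 ∧ H.Adj p.2 q.2 := Iff.rfl


section AuxTreeRel
open Finset

variable {𝕜 : Type} [RCLike 𝕜] {E : Type} [NormedAddCommGroup E] [InnerProductSpace 𝕜 E]
variable {V : Type} [Fintype V] [DecidableEq V] {T : SimpleGraph V}

local notation "⟪" x ", " y "⟫" => @inner 𝕜 _ _ x y

lemma exists_attach_vertex {S : Finset V} :
    ∀ {u w : V} (p : T.Walk u w), w ∉ S → u ∈ S → (∀ x ∈ p.support, x ∈ insert w S) →
      ∃ q ∈ S, T.Adj q w ∧ ∃ p' : T.Walk u q, ∀ x ∈ p'.support, x ∈ S := by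
  intro u w p
  induction p with
  | nil => intro hw hu _; exact absurd hu hw
  | @cons a b c hab p ih =>
    intro hw ha hsupp
    by_cases hb : b = c
    · subst hb
      exact ⟨a, ha, hab, SimpleGraph.Walk.nil, by simp [ha]⟩
    · have hbS : b ∈ S := by
        have := hsupp b (by simp [SimpleGraph.Walk.support_cons,
          SimpleGraph.Walk.start_mem_support])
        rcases Finset.mem_insert.mp this with h | h
        · exact absurd h hb
        · exact h
      obtain ⟨q, hqS, hqadj, p', hp'⟩ := ih hw hbS (fun x hx => hsupp x
        (by simp [SimpleGraph.Walk.support_cons]; right; exact hx))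
      exact ⟨q, hqS, hqadj, SimpleGraph.Walk.cons hab p', by
        intro x hx
        rcases (by simpa [SimpleGraph.Walk.support_cons] using hx : x = a ∨ x ∈ p'.support) with
          rfl | hx'
        · exact ha
        · exact hp' x hx'⟩

/-- Key lemma: for an orthogonal representation `z` of an acyclic graph `T` (non-orthogonality
pattern given by adjacency), if every vertex of `S` is connected to an external vertex `w`
within `S ∪ {w}`, then the vectors `z u`, `u ∈ S`, admit no nontrivial linear relation. -/
lemma acyclic_rel_zero (hT : T.IsAcyclic) (z : V → E)
    (hadj : ∀ u v : V, T.Adj u v → ⟪z u, z v⟫ ≠ 0)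
    (hnadj : ∀ u v : V, u ≠ v → ¬ T.Adj u v → ⟪z u, z v⟫ = 0) :
    ∀ S : Finset V, ∀ w : V, w ∉ S →
      (∀ u ∈ S, ∃ p : T.Walk u w, ∀ x ∈ p.support, x ∈ insert w S) →
      ∀ c : V → 𝕜, (∑ u ∈ S, c u • z u) = 0 → ∀ u ∈ S, c u = 0 := by
  intro S
  induction S using Finset.strongInduction with
  | _ S IH =>
  intro w hw hreach c hrel u₀ hu₀
  classical
  -- the connected component of u₀ inside S
  set conn : V → Prop := fun u => ∃ p : T.Walk u u₀, ∀ x ∈ p.support, x ∈ S with hconn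
  set C : Finset V := S.filter conn with hC
  have hu₀C : u₀ ∈ C := by
    refine Finset.mem_filter.mpr ⟨hu₀, ⟨SimpleGraph.Walk.nil, by simp [hu₀]⟩⟩
  -- orthogonality between C and S \ C
  have horth : ∀ u ∈ C, ∀ v ∈ S, v ∉ C → ⟪z v, z u⟫ = 0 := by
    intro u hu v hv hvC
    have huS : u ∈ S := (Finset.mem_filter.mp hu).1
    have hne : v ≠ u := fun h => hvC (h ▸ hu)
    refine hnadj v u hne (fun hadj' => hvC ?_)
    obtain ⟨p, hp⟩ := (Finset.mem_filter.mp hu).2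
    exact Finset.mem_filter.mpr ⟨hv, ⟨SimpleGraph.Walk.cons hadj' p, by
      intro x hx
      rcases (by simpa [SimpleGraph.Walk.support_cons] using hx : x = v ∨ x ∈ p.support) with
        rfl | hx'
      · exact hv
      · exact hp x hx'⟩⟩
  -- the component relation
  set ζ : E := ∑ u ∈ C, c u • z u with hζdef
  have hζ : ζ = 0 := by
    have hsplit : ζ + ∑ u ∈ S.filter (fun u => ¬ conn u), c u • z u = 0 := by
      rw [hζdef, hC, Finset.sum_filter_add_sum_filter_not]; exact hrel
    set η : E := ∑ u ∈ S.filter (fun u => ¬ conn u), c u • z u with hηdef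
    have hinner : ⟪η, ζ⟫ = 0 := by
      rw [hηdef, hζdef, sum_inner]
      refine Finset.sum_eq_zero (fun v hv => ?_)
      rw [inner_smul_left, inner_sum]
      have : ∀ u ∈ C, ⟪z v, c u • z u⟫ = 0 := by
        intro u hu
        rw [inner_smul_right, horth u hu v (Finset.mem_filter.mp hv).1
          (fun h => (Finset.mem_filter.mp hv).2 (Finset.mem_filter.mp h).2), mul_zero]
      rw [Finset.sum_eq_zero this, mul_zero]
    have hζη : η = -ζ := by linear_combination (norm := module) hsplit
    have : ⟪ζ, ζ⟫ = (0 : 𝕜) := by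
      have := hinner
      rw [hζη] at this
      rw [← neg_eq_zero, ← inner_neg_left]; exact this
    exact inner_self_eq_zero.mp this
  -- find the unique attachment vertex q of C to w
  obtain ⟨p₀, hp₀⟩ := hreach u₀ hu₀
  obtain ⟨q, hqS, hqadj, pq, hpq⟩ := exists_attach_vertex p₀ hw hu₀ hp₀
  have hqC : q ∈ C := Finset.mem_filter.mpr ⟨hqS, ⟨pq.reverse, by
    intro x hx; exact hpq x (by simpa using hx)⟩⟩
  -- uniqueness of the attachment vertex
  have huniq : ∀ v ∈ C, T.Adj w v → v = q := by
    intro v hv hadjwv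
    by_contra hvq
    have hbridge := (SimpleGraph.isAcyclic_iff_forall_adj_isBridge.mp hT) hadjwv
    rw [SimpleGraph.isBridge_iff] at hbridge
    refine hbridge (SimpleGraph.reachable_deleteEdges_iff_exists_walk.mpr ?_)
    obtain ⟨pqu, hpqu⟩ := (Finset.mem_filter.mp hqC).2
    obtain ⟨pvu, hpvu⟩ := (Finset.mem_filter.mp hv).2
    refine ⟨SimpleGraph.Walk.cons hqadj.symm (pqu.append pvu.reverse), ?_⟩
    intro hmem
    rw [SimpleGraph.Walk.edges_cons] at hmem
    rcases List.mem_cons.mp hmem with h | h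
    · rcases Sym2.eq_iff.mp h with ⟨-, h2⟩ | ⟨h1, -⟩
      · exact hvq h2
      · exact absurd h1.symm (T.ne_of_adj hqadj)
    · have hwsup : w ∈ (pqu.append pvu.reverse).support :=
        SimpleGraph.Walk.fst_mem_support_of_mem_edges _ h
      have : w ∈ S := by
        rcases (by simpa [SimpleGraph.Walk.support_append] using hwsup :
            w ∈ pqu.support ∨ w ∈ pvu.reverse.support.tail) with h' | h'
        · exact hpqu w h'
        · exact hpvu w (by
            have := List.mem_of_mem_tail h'
            simpa [SimpleGraph.Walk.support_reverse] using this)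
      exact hw this
  -- c q = 0
  have hcq : c q = 0 := by
    have h0 : ⟪z w, ζ⟫ = 0 := by rw [hζ, inner_zero_right]
    rw [hζdef, inner_sum] at h0
    have hsingle : ∀ u ∈ C, u ≠ q → ⟪z w, c u • z u⟫ = 0 := by
      intro u hu huq
      have hwu : w ≠ u := fun h => hw (h ▸ (Finset.mem_filter.mp hu).1)
      have : ¬ T.Adj w u := fun h => huq (huniq u hu h)
      rw [inner_smul_right, hnadj w u hwu this, mul_zero]
    rw [Finset.sum_eq_single q hsingle (fun h => absurd hqC h)] at h0
    rw [inner_smul_right] at h0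
    have : ⟪z w, z q⟫ ≠ 0 := hadj w q hqadj.symm
    exact (mul_eq_zero.mp h0).resolve_right this
  -- conclude
  by_cases hu₀q : u₀ = q
  · exact hu₀q ▸ hcq
  · -- recurse on C.erase q with handle q
    have hCsub : C ⊆ S := Finset.filter_subset _ _
    have hssub : C.erase q ⊂ S :=
      Finset.ssubset_iff_of_subset ((Finset.erase_subset _ _).trans hCsub) |>.mpr
        ⟨q, hqS, fun h => (Finset.mem_erase.mp h).1 rfl⟩
    have hreach' : ∀ u ∈ C.erase q, ∃ p : T.Walk u q, ∀ x ∈ p.support, x ∈ insert q (C.erase q) := by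
      intro u hu
      rw [Finset.insert_erase hqC]
      obtain ⟨pu, hpu⟩ := (Finset.mem_filter.mp (Finset.mem_of_mem_erase hu)).2
      obtain ⟨pqu, hpqu⟩ := (Finset.mem_filter.mp hqC).2
      refine ⟨pu.append pqu.reverse, ?_⟩
      intro x hx
      rcases (by simpa [SimpleGraph.Walk.support_append] using hx :
          x ∈ pu.support ∨ x ∈ pqu.reverse.support.tail) with h' | h'
      · -- x lies on the walk from u to u₀ inside S, hence x ∈ C
        refine Finset.mem_filter.mpr ⟨hpu x h', ⟨pu.dropUntil x h', ?_⟩⟩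
        intro y hy
        exact hpu y (SimpleGraph.Walk.support_dropUntil_subset _ h' hy)
      · have h'' : x ∈ pqu.support := by
          have := List.mem_of_mem_tail h'
          simpa [SimpleGraph.Walk.support_reverse] using this
        refine Finset.mem_filter.mpr ⟨hpqu x h'', ⟨pqu.dropUntil x h'', ?_⟩⟩
        intro y hy
        exact hpqu y (SimpleGraph.Walk.support_dropUntil_subset _ h'' hy)
    have hrel' : ∑ u ∈ C.erase q, c u • z u = 0 := by
      have h2 := Finset.add_sum_erase C (fun u => c u • z u) hqC
      simp only [hcq, zero_smul, zero_add] at h2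
      rw [h2, ← hζdef, hζ]
    have := IH (C.erase q) hssub q (fun h => (Finset.mem_erase.mp h).1 rfl) hreach' c hrel'
    exact this u₀ (Finset.mem_erase.mpr ⟨hu₀q, hu₀C⟩)
end AuxTreeRel

section AuxMain
open Finset
variable {𝕜 : Type} [RCLike 𝕜]
local notation "⟪" x ", " y "⟫" => @inner 𝕜 _ _ x y

lemma corona_rank_lower (m n : ℕ) (hm : 2 ≤ m) (hn : 1 ≤ n)
    (T : SimpleGraph (Fin m)) (hT : T.IsTree)
    (A : Matrix (Fin m ⊕ Fin m × Fin n) (Fin m ⊕ Fin m × Fin n) 𝕜)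
    (hA : A.PosSemidef)
    (hpat : ∀ i j, i ≠ j → (A i j ≠ 0 ↔ (corona T (⊤ : SimpleGraph (Fin n))).Adj i j)) :
    2 * m - 1 ≤ A.rank := by
  classical
  obtain ⟨B, hB⟩ : ∃ B : Matrix (Fin m ⊕ Fin m × Fin n) (Fin m ⊕ Fin m × Fin n) 𝕜, A = B.conjTranspose * B := by
    open scoped MatrixOrder in obtain ⟨B, hB'⟩ := CStarAlgebra.nonneg_iff_eq_star_mul_self.mp hA.nonneg
    exact ⟨B, hB'⟩
  set z : (Fin m ⊕ Fin m × Fin n) → EuclideanSpace 𝕜 (Fin m ⊕ Fin m × Fin n) :=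
    fun v => WithLp.toLp 2 (fun k => B k v) with hz
  have hgram : ∀ u v, ⟪z u, z v⟫ = A u v := by
    intro u v
    rw [hB, PiLp.inner_apply]
    simp [Matrix.mul_apply, Matrix.conjTranspose_apply, RCLike.inner_apply, hz, mul_comm]
  have hm0 : 0 < m := by omega
  have hn0 : 0 < n := by omega
  set i0 : Fin n := ⟨0, hn0⟩ with hi0
  set x : Fin m → EuclideanSpace 𝕜 (Fin m ⊕ Fin m × Fin n) := fun u => z (Sum.inl u) with hx
  set y : Fin m → EuclideanSpace 𝕜 (Fin m ⊕ Fin m × Fin n) :=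
    fun u => z (Sum.inr (u, i0)) with hy
  have hyy0 : ∀ u v : Fin m, u ≠ v → ⟪y u, y v⟫ = 0 := by
    intro u v huv
    rw [hy, hgram]
    by_contra h
    have := (hpat _ _ (by simp [huv])).mp h
    rw [corona_adj_rr] at this
    exact huv this.1
  have hxy0 : ∀ u v : Fin m, u ≠ v → ⟪x u, y v⟫ = 0 := by
    intro u v huv
    rw [hx, hy, hgram]
    by_contra h
    have := (hpat _ _ (by simp)).mp h
    rw [corona_adj_lr] at this
    exact huv this
  have hyx0 : ∀ u v : Fin m, u ≠ v → ⟪y u, x v⟫ = 0 := by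
    intro u v huv
    rw [hx, hy, hgram]
    by_contra h
    have := (hpat _ _ (by simp)).mp h
    rw [corona_adj_rl] at this
    exact huv this.symm
  have hxyne : ∀ u : Fin m, ⟪x u, y u⟫ ≠ 0 := by
    intro u
    rw [hx, hy, hgram]
    exact (hpat _ _ (by simp)).mpr (corona_adj_lr.mpr rfl)
  have hyne : ∀ u : Fin m, y u ≠ 0 := by
    intro u h
    exact hxyne u (by rw [h, inner_zero_right])
  have hyyne : ∀ u : Fin m, ⟪y u, y u⟫ ≠ 0 := fun u h =>
    hyne u (inner_self_eq_zero.mp h)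
  set z' : Fin m → EuclideanSpace 𝕜 (Fin m ⊕ Fin m × Fin n) :=
    fun u => x u - (⟪y u, x u⟫ / ⟪y u, y u⟫) • y u with hz'
  have hyz' : ∀ u v : Fin m, ⟪y v, z' u⟫ = 0 := by
    intro u v
    rw [hz']
    simp only [inner_sub_right, inner_smul_right]
    by_cases h : v = u
    · subst h
      rw [div_mul_cancel₀ _ (hyyne v)]
      ring
    · rw [hyx0 v u (fun h' => h h'), hyy0 v u (fun h' => h h')]
      ring
  have hz'z' : ∀ u v : Fin m, u ≠ v → ⟪z' u, z' v⟫ = A (Sum.inl u) (Sum.inl v) := by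
    intro u v huv
    have h1 : ⟪z' u, z' v⟫ = ⟪x u, z' v⟫ -
        (starRingEnd 𝕜) (⟪y u, x u⟫ / ⟪y u, y u⟫) * ⟪y u, z' v⟫ := by
      rw [hz']
      simp only [inner_sub_left, inner_smul_left]
    rw [h1, hyz' v u, mul_zero, sub_zero, hz']
    simp only [inner_sub_right, inner_smul_right]
    rw [hxy0 u v huv, mul_zero, sub_zero, hx, hgram]
  set W : Submodule 𝕜 (EuclideanSpace 𝕜 (Fin m ⊕ Fin m × Fin n)) :=
    Submodule.span 𝕜 (Set.range z) with hW
  haveI : FiniteDimensional 𝕜 W := FiniteDimensional.span_of_finite 𝕜 (Set.finite_range z)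
  set r : Fin m := ⟨0, hm0⟩ with hr
  set F : (Fin m ⊕ {u : Fin m // u ≠ r}) → EuclideanSpace 𝕜 (Fin m ⊕ Fin m × Fin n) :=
    fun i => match i with
    | Sum.inl u => y u
    | Sum.inr s => z' s.1
    with hF
  have hmem : ∀ i, F i ∈ W := by
    rintro (u | s)
    · exact Submodule.subset_span ⟨Sum.inr (u, i0), rfl⟩
    · exact Submodule.sub_mem _ (Submodule.subset_span ⟨Sum.inl s.1, rfl⟩)
        (Submodule.smul_mem _ _ (Submodule.subset_span ⟨Sum.inr (s.1, i0), rfl⟩))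
  have hindep : LinearIndependent 𝕜 F := by
    rw [Fintype.linearIndependent_iff]
    intro g hg
    rw [Fintype.sum_sum_type] at hg
    have hgy : ∀ v : Fin m, g (Sum.inl v) = 0 := by
      intro v
      have h0 : ⟪y v, (0 : EuclideanSpace 𝕜 (Fin m ⊕ Fin m × Fin n))⟫ = 0 := inner_zero_right _
      rw [← hg] at h0
      rw [inner_add_right, inner_sum, inner_sum] at h0
      simp only [inner_smul_right] at h0
      have e1 : ∑ u : Fin m, g (Sum.inl u) * ⟪y v, F (Sum.inl u)⟫
          = g (Sum.inl v) * ⟪y v, y v⟫ :=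
        Finset.sum_eq_single v
          (fun u _ huv => by
            have h2 : ⟪y v, y u⟫ = 0 := hyy0 v u (fun h => huv h.symm)
            show g (Sum.inl u) * ⟪y v, y u⟫ = 0
            rw [h2, mul_zero])
          (fun h => absurd (Finset.mem_univ v) h)
      have e2 : ∑ s : {u : Fin m // u ≠ r}, g (Sum.inr s) * ⟪y v, F (Sum.inr s)⟫ = 0 := by
        refine Finset.sum_eq_zero (fun s _ => ?_)
        show g (Sum.inr s) * ⟪y v, z' s.1⟫ = 0
        rw [hyz' s.1 v, mul_zero]
      rw [e1, e2, add_zero] at h0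
      exact (mul_eq_zero.mp h0).resolve_right (hyyne v)
    have hrel : ∑ u ∈ Finset.univ.erase r,
        (fun u => if h : u = r then 0 else g (Sum.inr ⟨u, h⟩)) u • z' u = 0 := by
      have h3 : ∑ s : {u : Fin m // u ≠ r}, g (Sum.inr s) • z' s.1 = 0 := by
        rw [← hg]
        have h4 : ∑ u : Fin m, g (Sum.inl u) • F (Sum.inl u) = 0 :=
          Finset.sum_eq_zero (fun u _ => by rw [hgy u, zero_smul])
        rw [h4, zero_add]
      calc ∑ u ∈ Finset.univ.erase r,
            (fun u => if h : u = r then 0 else g (Sum.inr ⟨u, h⟩)) u • z' u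
          = ∑ s : {u : Fin m // u ≠ r}, g (Sum.inr s) • z' s.1 := by
            rw [Finset.sum_subtype (p := fun u : Fin m => u ≠ r) (Finset.univ.erase r)
              (fun u => by simp)
              (fun u => (if h : u = r then 0 else g (Sum.inr ⟨u, h⟩)) • z' u)]
            exact Finset.sum_congr rfl (fun s _ => by rw [dif_neg s.2])
        _ = 0 := h3
    have hkill := acyclic_rel_zero hT.IsAcyclic z'
      (fun u v huv => by
        rw [hz'z' u v (T.ne_of_adj huv)]
        exact (hpat _ _ (by simp [T.ne_of_adj huv])).mpr (corona_adj_ll.mpr huv))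
      (fun u v huv hnadj => by
        rw [hz'z' u v huv]
        by_contra h
        exact hnadj (corona_adj_ll.mp ((hpat _ _ (by simp [huv])).mp h)))
      (Finset.univ.erase r) r (by simp)
      (by
        intro u hu
        obtain ⟨p⟩ := hT.isConnected.preconnected u r
        exact ⟨p, fun x _ => by
          rw [Finset.insert_erase (Finset.mem_univ r)]; exact Finset.mem_univ x⟩)
      _ hrel
    rintro (u | s)
    · exact hgy u
    · have := hkill s.1 (Finset.mem_erase.mpr ⟨s.2, Finset.mem_univ _⟩)
      rw [dif_neg s.2] at this
      exact this
  have hcard : Fintype.card (Fin m ⊕ {u : Fin m // u ≠ r}) = 2 * m - 1 := by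
    rw [Fintype.card_sum, Fintype.card_fin]
    have h5 : Fintype.card {u : Fin m // u ≠ r} = m - 1 := by
      rw [Fintype.card_subtype_compl, Fintype.card_subtype_eq, Fintype.card_fin]
    rw [h5]; omega
  have hle : 2 * m - 1 ≤ Module.finrank 𝕜 W := by
    rw [← hcard]
    have hindep' : LinearIndependent 𝕜 (fun i => (⟨F i, hmem i⟩ : W)) :=
      LinearIndependent.of_comp W.subtype hindep
    exact hindep'.fintype_card_le_finrank
  have hrank : A.rank = Module.finrank 𝕜 W := by
    rw [hB, Matrix.rank_conjTranspose_mul_self]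
    have h6 : B.rank = Module.finrank 𝕜 (Submodule.span 𝕜 (Set.range (Matrix.transpose B))) := by
      rw [Matrix.rank, Matrix.range_mulVecLin]; rfl
    rw [h6]
    let e := (EuclideanSpace.equiv (Fin m ⊕ Fin m × Fin n) 𝕜).toLinearEquiv
    have hmap : W.map (e : EuclideanSpace 𝕜 (Fin m ⊕ Fin m × Fin n) →ₗ[𝕜] (Fin m ⊕ Fin m × Fin n → 𝕜)) = Submodule.span 𝕜 (Set.range (Matrix.transpose B)) := by
      rw [hW, Submodule.map_span, ← Set.range_comp]
      rfl
    rw [← hmap]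
    exact LinearEquiv.finrank_map_eq e W
  rw [hrank]; exact hle
lemma corona_matrix_upper (m n : ℕ) (hm : 2 ≤ m) (hn : 1 ≤ n)
    (T : SimpleGraph (Fin m)) [DecidableRel T.Adj] (hT : T.IsTree) :
    ∃ A : Matrix (Fin m ⊕ Fin m × Fin n) (Fin m ⊕ Fin m × Fin n) 𝕜, A.PosSemidef ∧
      (∀ i j, i ≠ j → (A i j ≠ 0 ↔ (corona T (⊤ : SimpleGraph (Fin n))).Adj i j)) ∧
      A.rank ≤ 2 * m - 1 := by
  classical
  set ρ := (Fin m ⊕ {e : Sym2 (Fin m) // e ∈ T.edgeFinset}) with hρ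
  set B : Matrix ρ (Fin m ⊕ Fin m × Fin n) 𝕜 := fun k v =>
    match k, v with
    | Sum.inl w, Sum.inl u => if u = w then 1 else 0
    | Sum.inl w, Sum.inr p => if p.1 = w then 1 else 0
    | Sum.inr e, Sum.inl u => if u ∈ e.1 then 1 else 0
    | Sum.inr _, Sum.inr _ => 0
    with hB
  refine ⟨B.conjTranspose * B, Matrix.posSemidef_conjTranspose_mul_self B, ?_, ?_⟩
  · -- the pattern
    have key : ∀ v v', (B.conjTranspose * B) v v' =
        ∑ k : ρ, (starRingEnd 𝕜) (B k v) * B k v' := by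
      intro v v'
      simp [Matrix.mul_apply, Matrix.conjTranspose_apply]
    rintro (u | ⟨u, i⟩) (u' | ⟨u', j⟩) hne
    · -- inl, inl
      have huu' : u ≠ u' := fun h => hne (by rw [h])
      rw [key, corona_adj_ll]
      rw [Fintype.sum_sum_type]
      have h1 : ∑ w : Fin m, (starRingEnd 𝕜) (B (Sum.inl w) (Sum.inl u)) *
          B (Sum.inl w) (Sum.inl u') = 0 := by
        refine Finset.sum_eq_zero (fun w _ => ?_)
        show (starRingEnd 𝕜) (if u = w then 1 else 0) * (if u' = w then 1 else 0) = 0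
        rcases eq_or_ne u w with rfl | h
        · rw [if_neg (fun h' : u' = u => huu' h'.symm), mul_zero]
        · rw [if_neg h, map_zero, zero_mul]
      have h2 : ∑ e : {e : Sym2 (Fin m) // e ∈ T.edgeFinset},
          (starRingEnd 𝕜) (B (Sum.inr e) (Sum.inl u)) * B (Sum.inr e) (Sum.inl u') =
          if T.Adj u u' then 1 else 0 := by
        have : ∀ e : {e : Sym2 (Fin m) // e ∈ T.edgeFinset},
            (starRingEnd 𝕜) (B (Sum.inr e) (Sum.inl u)) * B (Sum.inr e) (Sum.inl u') =
            if e.1 = s(u, u') then 1 else 0 := by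
          intro e
          show (starRingEnd 𝕜) (if u ∈ e.1 then 1 else 0) * (if u' ∈ e.1 then 1 else 0) = _
          rw [apply_ite (starRingEnd 𝕜), map_one, map_zero, ite_zero_mul_ite_zero, one_mul]
          congr 1
          rw [eq_iff_iff]
          exact Sym2.mem_and_mem_iff huu'
        rw [Finset.sum_congr rfl (fun e _ => this e)]
        rw [Finset.sum_coe_sort T.edgeFinset (fun e => if e = s(u, u') then (1 : 𝕜) else 0)]
        rw [Finset.sum_ite_eq' T.edgeFinset s(u, u') (fun _ => (1 : 𝕜))]
        congr 1
        rw [eq_iff_iff, SimpleGraph.mem_edgeFinset, SimpleGraph.mem_edgeSet]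
      rw [h1, h2, zero_add]
      constructor
      · intro h
        by_contra hadj
        rw [if_neg hadj] at h
        exact h rfl
      · intro h
        rw [if_pos h]
        exact one_ne_zero
    · -- inl, inr
      rw [key, corona_adj_lr]
      rw [Fintype.sum_sum_type]
      have h1 : ∑ w : Fin m, (starRingEnd 𝕜) (B (Sum.inl w) (Sum.inl u)) *
          B (Sum.inl w) (Sum.inr (u', j)) = if u' = u then 1 else 0 := by
        have : ∀ w : Fin m, (starRingEnd 𝕜) (B (Sum.inl w) (Sum.inl u)) *
            B (Sum.inl w) (Sum.inr (u', j)) = if u = w ∧ u' = w then 1 else 0 := by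
          intro w
          show (starRingEnd 𝕜) (if u = w then 1 else 0) * (if u' = w then 1 else 0) = _
          rw [apply_ite (starRingEnd 𝕜), map_one, map_zero, ite_zero_mul_ite_zero, one_mul]
        rw [Finset.sum_congr rfl (fun w _ => this w)]
        rcases eq_or_ne u' u with rfl | h
        · rw [Finset.sum_eq_single u' (fun w _ hw => if_neg (fun hc => hw hc.1.symm))
            (fun h => absurd (Finset.mem_univ u') h), if_pos ⟨rfl, rfl⟩, if_pos rfl]
        · rw [if_neg h]
          refine Finset.sum_eq_zero (fun w _ => if_neg ?_)
          rintro ⟨rfl, rfl⟩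
          exact h rfl
      have h2 : ∑ e : {e : Sym2 (Fin m) // e ∈ T.edgeFinset},
          (starRingEnd 𝕜) (B (Sum.inr e) (Sum.inl u)) * B (Sum.inr e) (Sum.inr (u', j)) = 0 := by
        refine Finset.sum_eq_zero (fun e _ => ?_)
        show (starRingEnd 𝕜) (if u ∈ e.1 then 1 else 0) * 0 = 0
        rw [mul_zero]
      rw [h1, h2, add_zero]
      constructor
      · intro h
        by_contra hne'
        rw [if_neg (fun hc : u' = u => hne' hc.symm)] at h
        exact h rfl
      · intro h
        rw [if_pos h.symm]
        exact one_ne_zero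
    · -- inr, inl
      rw [key, corona_adj_rl]
      rw [Fintype.sum_sum_type]
      have h1 : ∑ w : Fin m, (starRingEnd 𝕜) (B (Sum.inl w) (Sum.inr (u, i))) *
          B (Sum.inl w) (Sum.inl u') = if u' = u then 1 else 0 := by
        have : ∀ w : Fin m, (starRingEnd 𝕜) (B (Sum.inl w) (Sum.inr (u, i))) *
            B (Sum.inl w) (Sum.inl u') = if u = w ∧ u' = w then 1 else 0 := by
          intro w
          show (starRingEnd 𝕜) (if u = w then 1 else 0) * (if u' = w then 1 else 0) = _
          rw [apply_ite (starRingEnd 𝕜), map_one, map_zero, ite_zero_mul_ite_zero, one_mul]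
        rw [Finset.sum_congr rfl (fun w _ => this w)]
        rcases eq_or_ne u' u with rfl | h
        · rw [Finset.sum_eq_single u' (fun w _ hw => if_neg (fun hc => hw hc.1.symm))
            (fun h => absurd (Finset.mem_univ u') h), if_pos ⟨rfl, rfl⟩, if_pos rfl]
        · rw [if_neg h]
          refine Finset.sum_eq_zero (fun w _ => if_neg ?_)
          rintro ⟨rfl, rfl⟩
          exact h rfl
      have h2 : ∑ e : {e : Sym2 (Fin m) // e ∈ T.edgeFinset},
          (starRingEnd 𝕜) (B (Sum.inr e) (Sum.inr (u, i))) * B (Sum.inr e) (Sum.inl u') = 0 := by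
        refine Finset.sum_eq_zero (fun e _ => ?_)
        show (starRingEnd 𝕜) 0 * _ = 0
        rw [map_zero, zero_mul]
      rw [h1, h2, add_zero]
      constructor
      · intro h
        by_contra hne'
        rw [if_neg hne'] at h
        exact h rfl
      · intro h
        rw [if_pos h]
        exact one_ne_zero
    · -- inr, inr
      rw [key, corona_adj_rr]
      rw [Fintype.sum_sum_type]
      have h1 : ∑ w : Fin m, (starRingEnd 𝕜) (B (Sum.inl w) (Sum.inr (u, i))) *
          B (Sum.inl w) (Sum.inr (u', j)) = if u' = u then 1 else 0 := by
        have : ∀ w : Fin m, (starRingEnd 𝕜) (B (Sum.inl w) (Sum.inr (u, i))) *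
            B (Sum.inl w) (Sum.inr (u', j)) = if u = w ∧ u' = w then 1 else 0 := by
          intro w
          show (starRingEnd 𝕜) (if u = w then 1 else 0) * (if u' = w then 1 else 0) = _
          rw [apply_ite (starRingEnd 𝕜), map_one, map_zero, ite_zero_mul_ite_zero, one_mul]
        rw [Finset.sum_congr rfl (fun w _ => this w)]
        rcases eq_or_ne u' u with rfl | h
        · rw [Finset.sum_eq_single u' (fun w _ hw => if_neg (fun hc => hw hc.1.symm))
            (fun h => absurd (Finset.mem_univ u') h), if_pos ⟨rfl, rfl⟩, if_pos rfl]
        · rw [if_neg h]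
          refine Finset.sum_eq_zero (fun w _ => if_neg ?_)
          rintro ⟨rfl, rfl⟩
          exact h rfl
      have h2 : ∑ e : {e : Sym2 (Fin m) // e ∈ T.edgeFinset},
          (starRingEnd 𝕜) (B (Sum.inr e) (Sum.inr (u, i))) * B (Sum.inr e) (Sum.inr (u', j)) = 0 := by
        refine Finset.sum_eq_zero (fun e _ => ?_)
        show (starRingEnd 𝕜) 0 * _ = 0
        rw [map_zero, zero_mul]
      rw [h1, h2, add_zero]
      constructor
      · intro h
        have huu' : u = u' := by
          by_contra hc
          rw [if_neg (fun hc' : u' = u => hc hc'.symm)] at h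
          exact h rfl
        refine ⟨huu', ?_⟩
        subst huu'
        have : i ≠ j := fun hij => hne (by rw [hij])
        exact this
      · rintro ⟨rfl, -⟩
        rw [if_pos rfl]
        exact one_ne_zero
  · -- the rank bound
    rw [Matrix.rank_conjTranspose_mul_self]
    refine le_trans (Matrix.rank_le_card_height B) ?_
    rw [Fintype.card_sum, Fintype.card_fin, Fintype.card_coe]
    have := hT.card_edgeFinset
    rw [Fintype.card_fin] at this
    omega

lemma mrPlus_corona_eq (𝕜 : Type) [RCLike 𝕜] (m n : ℕ) (hm : 2 ≤ m) (hn : 2 ≤ n)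
    (T : SimpleGraph (Fin m)) (hT : T.IsTree) :
    mrPlus 𝕜 (corona T (⊤ : SimpleGraph (Fin n))) = 2 * m - 1 := by
  classical
  obtain ⟨A₀, hps, hpat, hrank⟩ := corona_matrix_upper (𝕜 := 𝕜) m n hm (by omega) T hT
  rw [mrPlus]
  apply le_antisymm
  · exact le_trans (Nat.sInf_le ⟨A₀, hps, hpat, rfl⟩) hrank
  · refine le_csInf ⟨A₀.rank, A₀, hps, hpat, rfl⟩ ?_
    rintro r ⟨A, h1, h2, rfl⟩
    exact corona_rank_lower m n hm (by omega) T hT A h1 h2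
end AuxMain

/-- for a tree `T` of order `m ≥ 2` and `n ≥ 2`, `mr₊(T ∘ K_n) = 2m − 1`. -/
theorem mrPlus_corona_tree_complete (m n : ℕ) (hm : 2 ≤ m) (hn : 2 ≤ n)
    (T : SimpleGraph (Fin m)) (hT : T.IsTree) :
    mrPlus ℝ (corona T (⊤ : SimpleGraph (Fin n))) = 2 * m - 1 ∧
    mrPlus ℂ (corona T (⊤ : SimpleGraph (Fin n))) = 2 * m - 1 :=
  ⟨mrPlus_corona_eq ℝ m n hm hn T hT, mrPlus_corona_eq ℂ m n hm hn T hT⟩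
end
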